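/- For every positive integer k, the number of ODD colored compositions of k equals the number of binomial(n,2)-color compositions of k+1. -/

import Mathlib

/-- The number of ODD colored compositions of `ℓ`: compositions where each part
in an odd position `i` (positions counted from 1) gets a color in `{1, …, pᵢ}`,
i.e. `∑` over compositions of `∏` of the parts in odd positions. -/
def oddColoredCount (ℓ : ℕ) : ℕ :=
  ∑ c : Composition ℓ, ∏ i ∈ Finset.range c.blocks.length,
    if (i + 1) % 2 = 1 then c.blocks.getD i 1 else 1

/-- The number of `binomial(n,2)`-color compositions of `ℓ`: compositions where each
part `p` gets a 2-element subset of `{1, …, p}` as its color, so `C(p, 2)` choices. -/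
def chooseTwoColoredCount (ℓ : ℕ) : ℕ :=
  ∑ c : Composition ℓ, (c.blocks.map (fun p => Nat.choose p 2)).prod

namespace OddCC

mutual
  /-- weight with odd positions (1-indexed) weighted -/
  def gA : List ℕ → ℕ
    | [] => 1
    | p :: l => p * gB l
  /-- weight with even positions (1-indexed) weighted -/
  def gB : List ℕ → ℕ
    | [] => 1
    | _ :: l => gA l
end

def AA (n : ℕ) : ℕ := ∑ c : Composition n, gA c.blocks
def BB (n : ℕ) : ℕ := ∑ c : Composition n, gB c.blocks
def TT (n : ℕ) : ℕ := ∑ c : Composition n, (c.blocks.map (fun p => Nat.choose p 2)).prod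

instance : Unique (Composition 0) where
  default := ⟨[], by simp, rfl⟩
  uniq c := by
    have h : c.blocks = [] := by
      cases hb : c.blocks with
      | nil => rfl
      | cons p l =>
        exfalso
        have hs := c.blocks_sum
        rw [hb] at hs
        have hp : 0 < p := c.blocks_pos (hb ▸ @List.mem_cons_self _ p l)
        simp [List.sum_cons] at hs
        omega
    apply Composition.ext
    simp [h]

/-- Splitting off the first block of a composition of `n+1`. -/
def compEquiv (n : ℕ) : Composition (n + 1) ≃ Σ p : Fin (n + 1), Composition (n - p) where
  toFun c := by
    refine ⟨⟨c.blocks.headI - 1, ?_⟩, ⟨c.blocks.tail, ?_, ?_⟩⟩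
    · rcases hb : c.blocks with _ | ⟨a, l⟩
      · have := c.blocks_sum; rw [hb] at this; simp at this
      · have hs := c.blocks_sum; rw [hb] at hs
        have hpos : 0 < a := c.blocks_pos (hb ▸ @List.mem_cons_self _ a l)
        have : ∀ x ∈ l, 0 ≤ x := fun x _ => Nat.zero_le x
        simp only [List.sum_cons] at hs
        simp [hb]
        omega
    · intro i hi
      exact c.blocks_pos (List.mem_of_mem_tail hi)
    · show c.blocks.tail.sum = n - (c.blocks.headI - 1)
      rcases hb : c.blocks with _ | ⟨a, l⟩
      · have := c.blocks_sum; rw [hb] at this; simp at this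
      · have hs := c.blocks_sum; rw [hb] at hs
        have hpos : 0 < a := c.blocks_pos (hb ▸ @List.mem_cons_self _ a l)
        simp only [List.sum_cons] at hs
        simp [hb]
        omega
  invFun x := ⟨(x.1.val + 1) :: x.2.blocks, by
      intro i hi
      rcases List.mem_cons.1 hi with h | h
      · omega
      · exact x.2.blocks_pos h, by
      have := x.2.blocks_sum
      have hle : x.1.val ≤ n := Nat.lt_succ_iff.mp x.1.isLt
      simp [List.sum_cons, this]
      omega⟩
  left_inv c := by
    apply Composition.ext
    rcases hb : c.blocks with _ | ⟨a, l⟩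
    · have := c.blocks_sum; rw [hb] at this; simp at this
    · have hpos : 0 < a := c.blocks_pos (hb ▸ @List.mem_cons_self _ a l)
      simp only [hb, List.headI, List.tail]
      congr 1
      omega
  right_inv x := rfl

lemma sum_comp_succ (n : ℕ) (f : List ℕ → ℕ) :
    ∑ c : Composition (n + 1), f c.blocks
      = ∑ p ∈ Finset.range (n + 1), ∑ c : Composition (n - p), f ((p + 1) :: c.blocks) := by
  have h1 : ∑ c : Composition (n + 1), f c.blocks
      = ∑ x : Σ p : Fin (n + 1), Composition (n - p), f ((x.1.val + 1) :: x.2.blocks) :=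
    Fintype.sum_equiv (compEquiv n) _ _ (fun c => by
      rcases h : compEquiv n c with ⟨p, d⟩
      have : c = (compEquiv n).symm ⟨p, d⟩ := by rw [← h]; simp
      subst this
      rfl)
  rw [h1, ← Finset.univ_sigma_univ, Finset.sum_sigma, ← Fin.sum_univ_eq_sum_range]

lemma AA_zero : AA 0 = 1 := by simp [AA, gA]; rfl
lemma BB_zero : BB 0 = 1 := by simp [BB, gB]; rfl
lemma TT_zero : TT 0 = 1 := by
  rw [TT, Fintype.sum_unique]
  rfl

lemma AA_succ (n : ℕ) :
    AA (n + 1) = ∑ p ∈ Finset.range (n + 1), (p + 1) * BB (n - p) := by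
  rw [AA, sum_comp_succ]
  refine Finset.sum_congr rfl fun p _ => ?_
  rw [BB, Finset.mul_sum]
  rfl

lemma BB_succ (n : ℕ) :
    BB (n + 1) = ∑ p ∈ Finset.range (n + 1), AA (n - p) := by
  rw [BB, sum_comp_succ]
  rfl

lemma TT_succ (n : ℕ) :
    TT (n + 1) = ∑ p ∈ Finset.range (n + 1), Nat.choose (p + 1) 2 * TT (n - p) := by
  rw [TT, sum_comp_succ n (fun l => (l.map (fun p => Nat.choose p 2)).prod)]
  refine Finset.sum_congr rfl fun p _ => ?_
  simp only [List.map_cons, List.prod_cons, TT, Finset.mul_sum]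

def Sf (X : ℕ → ℕ) (n : ℕ) : ℕ := ∑ p ∈ Finset.range (n + 1), (p + 1) * X (n - p)
def Ef (X : ℕ → ℕ) (n : ℕ) : ℕ := ∑ p ∈ Finset.range (n + 1), X p

lemma Ef_succ (X : ℕ → ℕ) (n : ℕ) : Ef X (n + 1) = Ef X n + X (n + 1) :=
  Finset.sum_range_succ X (n + 1)

lemma sum_reflect (X : ℕ → ℕ) (n : ℕ) :
    ∑ p ∈ Finset.range (n + 1), X (n - p) = Ef X n := by
  rw [Ef, ← Finset.sum_range_reflect]
  refine Finset.sum_congr rfl fun p hp => ?_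
  congr 1
  have := Finset.mem_range.mp hp
  omega

lemma Sf_succ (X : ℕ → ℕ) (n : ℕ) :
    Sf X (n + 1) = Sf X n + X (n + 1) + Ef X n := by
  rw [Sf, Finset.sum_range_succ']
  have h1 : ∀ p ∈ Finset.range (n + 1),
      (p + 1 + 1) * X (n + 1 - (p + 1)) = (p + 1) * X (n - p) + X (n - p) := by
    intro p hp
    have : n + 1 - (p + 1) = n - p := by omega
    rw [this]; ring
  rw [Finset.sum_congr rfl h1, Finset.sum_add_distrib, sum_reflect]
  simp [Sf]
  ring

lemma AA_eq_Sf (n : ℕ) : AA (n + 1) = Sf BB n := AA_succ n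
lemma BB_eq_Ef (n : ℕ) : BB (n + 1) = Ef AA n := by rw [BB_succ, sum_reflect]

lemma TT_one : TT 1 = 0 := by
  rw [TT_succ]
  simp

lemma TT_step (n : ℕ) : TT (n + 2) = TT (n + 1) + Sf TT n := by
  rw [TT_succ (n + 1), Finset.sum_range_succ']
  have h1 : ∀ p ∈ Finset.range (n + 1),
      Nat.choose (p + 1 + 1) 2 * TT (n + 1 - (p + 1))
        = Nat.choose (p + 1) 2 * TT (n - p) + (p + 1) * TT (n - p) := by
    intro p hp
    have h2 : n + 1 - (p + 1) = n - p := by omega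
    have h3 : Nat.choose (p + 2) 2 = Nat.choose (p + 1) 2 + (p + 1) := by
      rw [Nat.choose_succ_succ (p + 1) 1]
      simp [Nat.add_comm]
    rw [h2, h3]; ring
  rw [Finset.sum_congr rfl h1, Finset.sum_add_distrib]
  rw [← TT_succ n]
  simp [Sf]

lemma main_ind (n : ℕ) :
    TT (n + 2) = AA (n + 1) ∧ Ef TT (n + 1) = BB (n + 1) ∧ Sf TT (n + 1) = Ef BB (n + 1) := by
  induction n with
  | zero =>
    have hT2 : TT 2 = 1 := by
      rw [TT_step 0]
      simp [Sf, TT_one, TT_zero]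
    have hA1 : AA 1 = 1 := by rw [AA_eq_Sf]; simp [Sf, BB_zero]
    have hB1 : BB 1 = 1 := by rw [BB_eq_Ef]; simp [Ef, AA_zero]
    refine ⟨by rw [hT2, hA1], ?_, ?_⟩
    · simp [Ef, Finset.sum_range_succ, TT_zero, TT_one, hB1]
    · simp [Sf, Ef, Finset.sum_range_succ, TT_zero, TT_one, BB_zero, hB1]
  | succ n ih =>
    obtain ⟨hP, hQ, hR⟩ := ih
    have hBB : BB (n + 2) = BB (n + 1) + AA (n + 1) := by
      rw [BB_eq_Ef (n + 1), Ef_succ, ← BB_eq_Ef]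
    have hQ' : Ef TT (n + 2) = BB (n + 2) := by
      rw [Ef_succ, hQ, hP, hBB]
    have hR' : Sf TT (n + 2) = Ef BB (n + 2) := by
      rw [Sf_succ, hR, hP, hQ, Ef_succ BB (n + 1), hBB]
      ring
    refine ⟨?_, hQ', hR'⟩
    rw [TT_step (n + 1), hP, hR, AA_eq_Sf (n + 1), Sf_succ, ← AA_eq_Sf, Ef_succ]
    ring

lemma prod_eq (l : List ℕ) :
    ((∏ i ∈ Finset.range l.length, if (i + 1) % 2 = 1 then l.getD i 1 else 1) = gA l)
      ∧ ((∏ i ∈ Finset.range l.length, if (i + 1) % 2 = 0 then l.getD i 1 else 1) = gB l) := by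
  induction l with
  | nil => simp [gA, gB]
  | cons p l ih =>
    obtain ⟨ihA, ihB⟩ := ih
    constructor
    · rw [List.length_cons, Finset.prod_range_succ']
      have h1 : ∀ i ∈ Finset.range l.length,
          (if (i + 1 + 1) % 2 = 1 then (p :: l).getD (i + 1) 1 else 1)
            = (if (i + 1) % 2 = 0 then l.getD i 1 else 1) := by
        intro i _
        have : ((i + 1 + 1) % 2 = 1) ↔ ((i + 1) % 2 = 0) := by omega
        rw [List.getD_cons_succ, if_congr this rfl rfl]
      rw [Finset.prod_congr rfl h1, ihB]
      simp [gA, Nat.mul_comm]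
    · rw [List.length_cons, Finset.prod_range_succ']
      have h1 : ∀ i ∈ Finset.range l.length,
          (if (i + 1 + 1) % 2 = 0 then (p :: l).getD (i + 1) 1 else 1)
            = (if (i + 1) % 2 = 1 then l.getD i 1 else 1) := by
        intro i _
        have : ((i + 1 + 1) % 2 = 0) ↔ ((i + 1) % 2 = 1) := by omega
        rw [List.getD_cons_succ, if_congr this rfl rfl]
      rw [Finset.prod_congr rfl h1, ihA]
      simp [gB]

end OddCC

theorem oddColoredCount_eq_chooseTwoColoredCount (k : ℕ) (hk : 0 < k) :
    oddColoredCount k = chooseTwoColoredCount (k + 1) := by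
  obtain ⟨n, rfl⟩ : ∃ n, k = n + 1 := ⟨k - 1, by omega⟩
  have h1 : oddColoredCount (n + 1) = OddCC.AA (n + 1) := by
    refine Finset.sum_congr rfl fun c _ => (OddCC.prod_eq c.blocks).1
  have h2 : chooseTwoColoredCount (n + 2) = OddCC.TT (n + 2) := rfl
  rw [h1, h2, (OddCC.main_ind n).1]
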